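/- For n = 2 or n = 3: let S be a nonempty set of density matrices on ℂ^n, N = {|v_ℓ⟩} an orthonormal basis, and s_k = max_{ρ∈S} max_{|I|=k} Tr(N_I ρ). Then 2 s_1 ≥ s_2, and when n = 3 also 2 s_2 ≥ s_1 + s_3. Hence the vector s = (s_1, s_2 − s_1, ..., s_n − s_{n−1}) is in non-increasing order. -/

import Mathlib

open Finset Matrix ComplexOrder

/-- `N_I = ∑_{ℓ ∈ I} |v_ℓ⟩⟨v_ℓ|`. -/
noncomputable def projSum {n : ℕ} (v : Fin n → Fin n → ℂ) (I : Finset (Fin n)) :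
    Matrix (Fin n) (Fin n) ℂ :=
  ∑ ℓ ∈ I, Matrix.vecMulVec (v ℓ) (star (v ℓ))

/-- `max_{|I| = k} Tr(N_I ρ)`. -/
noncomputable def innerMax {n : ℕ} (v : Fin n → Fin n → ℂ)
    (ρ : Matrix (Fin n) (Fin n) ℂ) (k : ℕ) : ℝ :=
  sSup {s : ℝ | ∃ I : Finset (Fin n), I.card = k ∧ s = (Matrix.trace (projSum v I * ρ)).re}

/-- for `n = 2` or `n = 3`, with `s k = max_{ρ ∈ S} max_{|I|=k} Tr(N_I ρ)`
(attained, `s 0 = 0`), one has `2 s 1 ≥ s 2`, and for `n = 3` also `2 s 2 ≥ s 1 + s 3`;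
hence the increment vector `(s 1, s 2 − s 1, …, s n − s (n-1))` is non-increasing. -/
noncomputable def TT {n : ℕ} (v : Fin n → Fin n → ℂ) (ρ : Matrix (Fin n) (Fin n) ℂ)
    (I : Finset (Fin n)) : ℝ := (Matrix.trace (projSum v I * ρ)).re

lemma TT_sum {n : ℕ} (v : Fin n → Fin n → ℂ) (ρ : Matrix (Fin n) (Fin n) ℂ)
    (I : Finset (Fin n)) : TT v ρ I = ∑ ℓ ∈ I, TT v ρ {ℓ} := by
  simp only [TT, projSum, Finset.sum_singleton, Finset.sum_mul, Matrix.trace_sum,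
    Complex.re_sum]

lemma innerMax_set_finite {n : ℕ} (v : Fin n → Fin n → ℂ) (ρ : Matrix (Fin n) (Fin n) ℂ)
    (k : ℕ) :
    {s : ℝ | ∃ I : Finset (Fin n), I.card = k ∧
      s = (Matrix.trace (projSum v I * ρ)).re}.Finite := by
  apply Set.Finite.subset
    (Set.finite_range (fun I : Finset (Fin n) => (Matrix.trace (projSum v I * ρ)).re))
  rintro x ⟨I, hI, rfl⟩
  exact ⟨I, rfl⟩

lemma TT_le_innerMax {n : ℕ} (v : Fin n → Fin n → ℂ) (ρ : Matrix (Fin n) (Fin n) ℂ)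
    {I : Finset (Fin n)} {k : ℕ} (hI : I.card = k) : TT v ρ I ≤ innerMax v ρ k :=
  le_csSup (innerMax_set_finite v ρ k).bddAbove ⟨I, hI, rfl⟩

lemma innerMax_attained {n : ℕ} (v : Fin n → Fin n → ℂ) (ρ : Matrix (Fin n) (Fin n) ℂ)
    {k : ℕ} (hk : k ≤ n) : ∃ I : Finset (Fin n), I.card = k ∧ innerMax v ρ k = TT v ρ I := by
  obtain ⟨I0, -, hI0⟩ := Finset.exists_subset_card_eq (s := (Finset.univ : Finset (Fin n))) (n := k)
    (by simpa using hk)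
  have hne : {s : ℝ | ∃ I : Finset (Fin n), I.card = k ∧
      s = (Matrix.trace (projSum v I * ρ)).re}.Nonempty := ⟨_, I0, hI0, rfl⟩
  obtain ⟨I, hI, h⟩ := hne.csSup_mem (innerMax_set_finite v ρ k)
  exact ⟨I, hI, h⟩

lemma projSum_univ {n : ℕ} (v : Fin n → Fin n → ℂ)
    (hv : ∀ i j, star (v i) ⬝ᵥ v j = if i = j then (1 : ℂ) else 0) :
    projSum v Finset.univ = 1 := by
  have hM : (Matrix.of v) * (Matrix.of v)ᴴ = 1 := by
    ext i j
    simp only [Matrix.mul_apply, Matrix.conjTranspose_apply, Matrix.of_apply]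
    calc ∑ k, v i k * star (v j k) = ∑ k, star (v j k) * v i k := by
          simp [mul_comm]
      _ = star (v j) ⬝ᵥ v i := rfl
      _ = if i = j then 1 else 0 := by rw [hv j i]; simp [eq_comm]
      _ = (1 : Matrix (Fin n) (Fin n) ℂ) i j := by simp [Matrix.one_apply]
  have hMM : (Matrix.of v)ᴴ * (Matrix.of v) = 1 := mul_eq_one_comm.mp hM
  ext i j
  have h : ((Matrix.of v)ᴴ * Matrix.of v) i j = (1 : Matrix (Fin n) (Fin n) ℂ) i j := by
    rw [hMM]
  simp only [Matrix.mul_apply, Matrix.conjTranspose_apply, Matrix.of_apply] at h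
  simp only [projSum, Matrix.sum_apply, Matrix.vecMulVec_apply, Pi.star_apply]
  calc ∑ ℓ, v ℓ i * star (v ℓ j) = star (∑ ℓ, star (v ℓ i) * v ℓ j) := by
        simp [star_sum, mul_comm]
    _ = star ((1 : Matrix (Fin n) (Fin n) ℂ) i j) := by rw [h]
    _ = (1 : Matrix (Fin n) (Fin n) ℂ) i j := by
        by_cases hij : i = j <;> simp [Matrix.one_apply, hij]

lemma TT_univ {n : ℕ} (v : Fin n → Fin n → ℂ) (ρ : Matrix (Fin n) (Fin n) ℂ)
    (hv : ∀ i j, star (v i) ⬝ᵥ v j = if i = j then (1 : ℂ) else 0)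
    (hρ : Matrix.trace ρ = 1) : TT v ρ Finset.univ = 1 := by
  simp [TT, projSum_univ v hv, hρ]

theorem upper_bound_sorted_low_dim {n : ℕ} (hn : n = 2 ∨ n = 3)
    (S : Set (Matrix (Fin n) (Fin n) ℂ)) (hne : S.Nonempty)
    (hdens : ∀ ρ ∈ S, ρ.PosSemidef ∧ Matrix.trace ρ = 1)
    (v : Fin n → Fin n → ℂ)
    (hv : ∀ i j, star (v i) ⬝ᵥ v j = if i = j then (1 : ℂ) else 0)
    (s : ℕ → ℝ) (hs0 : s 0 = 0)
    (hs : ∀ k, 1 ≤ k → k ≤ n → IsGreatest {t : ℝ | ∃ ρ ∈ S, t = innerMax v ρ k} (s k)) :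
    s 2 ≤ 2 * s 1 ∧ (n = 3 → s 1 + s 3 ≤ 2 * s 2) ∧
      (∀ j k : Fin n, j ≤ k →
        s ((k : ℕ) + 1) - s (k : ℕ) ≤ s ((j : ℕ) + 1) - s (j : ℕ)) := by
  have hn2 : 2 ≤ n := by rcases hn with rfl | rfl <;> norm_num
  -- every Tr(N_I ρ) with |I| = k is ≤ s k
  have TleS : ∀ ρ ∈ S, ∀ I : Finset (Fin n), 1 ≤ I.card → TT v ρ I ≤ s I.card := by
    intro ρ hρ I h1
    have hcard : I.card ≤ n := by simpa using Finset.card_le_univ I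
    refine (TT_le_innerMax v ρ rfl).trans ?_
    exact (hs I.card h1 hcard).2 ⟨ρ, hρ, rfl⟩
  -- Part 1 : s 2 ≤ 2 * s 1
  have h21 : s 2 ≤ 2 * s 1 := by
    obtain ⟨ρ, hρ, hsρ⟩ := (hs 2 one_le_two hn2).1
    obtain ⟨I, hI, hIm⟩ := innerMax_attained v ρ hn2
    have : TT v ρ I ≤ 2 * s 1 := by
      rw [TT_sum]
      have hle : ∀ ℓ ∈ I, TT v ρ {ℓ} ≤ s 1 := by
        intro ℓ _
        simpa using TleS ρ hρ {ℓ} (by simp)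
      calc ∑ ℓ ∈ I, TT v ρ {ℓ} ≤ I.card • s 1 := Finset.sum_le_card_nsmul I _ (s 1) hle
        _ = 2 * s 1 := by rw [hI]; simp [nsmul_eq_mul]
    rw [hsρ, hIm]; exact this
  have h32 : n = 3 → s 1 + s 3 ≤ 2 * s 2 := by
    rintro rfl
    -- s 3 = 1
    have hs3 : s 3 = 1 := by
      obtain ⟨ρ, hρ, hsρ⟩ := (hs 3 (by norm_num) le_rfl).1
      obtain ⟨I, hI, hIm⟩ := innerMax_attained v ρ (le_refl 3)
      have hIu : I = Finset.univ := Finset.eq_univ_of_card I (by simpa using hI)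
      rw [hsρ, hIm, hIu, TT_univ v ρ hv (hdens ρ hρ).2]
    -- witness for s 1
    obtain ⟨ρ, hρ, hsρ⟩ := (hs 1 le_rfl (by norm_num)).1
    obtain ⟨I, hI, hIm⟩ := innerMax_attained v ρ (by norm_num : (1:ℕ) ≤ 3)
    obtain ⟨ℓ0, rfl⟩ := Finset.card_eq_one.mp hI
    have hccard : ({ℓ0} : Finset (Fin 3))ᶜ.card = 2 := by
      rw [Finset.card_compl]; simp
    obtain ⟨a, b, hab, hcompl⟩ := Finset.card_eq_two.mp hccard
    have ha : a ≠ ℓ0 := by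
      have : a ∈ ({ℓ0} : Finset (Fin 3))ᶜ := by rw [hcompl]; simp
      simpa [Finset.mem_compl] using this
    have hb : b ≠ ℓ0 := by
      have : b ∈ ({ℓ0} : Finset (Fin 3))ᶜ := by rw [hcompl]; simp
      simpa [Finset.mem_compl] using this
    set t : Fin 3 → ℝ := fun ℓ => TT v ρ {ℓ} with ht
    have hsum1 : t ℓ0 + (t a + t b) = 1 := by
      have h1 : TT v ρ Finset.univ = 1 := TT_univ v ρ hv (hdens ρ hρ).2
      rw [TT_sum] at h1
      rw [← h1, ← Finset.sum_add_sum_compl {ℓ0}, hcompl]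
      simp [Finset.sum_pair hab, ht]
    have hs1 : s 1 = t ℓ0 := by
      rw [hsρ, hIm, TT_sum]; simp [ht]
    have hJ1 : t ℓ0 + t a ≤ s 2 := by
      have := TleS ρ hρ {ℓ0, a} (by rw [Finset.card_pair (Ne.symm ha)]; norm_num)
      rw [Finset.card_pair (Ne.symm ha), TT_sum, Finset.sum_pair (Ne.symm ha)] at this
      simpa [ht] using this
    have hJ2 : t ℓ0 + t b ≤ s 2 := by
      have := TleS ρ hρ {ℓ0, b} (by rw [Finset.card_pair (Ne.symm hb)]; norm_num)
      rw [Finset.card_pair (Ne.symm hb), TT_sum, Finset.sum_pair (Ne.symm hb)] at this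
      simpa [ht] using this
    rw [hs3, hs1]
    linarith
  refine ⟨h21, h32, ?_⟩
  intro j k hjk
  rcases hn with rfl | rfl
  · fin_cases j <;> fin_cases k <;>
      simp_all <;> linarith
  · have h32' := h32 rfl
    fin_cases j <;> fin_cases k <;>
      simp_all <;> linarith
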